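/- Let f = h·conj(g) be a sense-preserving logharmonic mapping with dilatation ω = g'h/(gh'), and ψ analytic with ψ' = h'g. If ψ is a convex univalent mapping of 𝔻, then ‖P_f‖ ≤ 5. -/

import Mathlib

open Complex Metric Set

def unitDisk : Set ℂ := Metric.ball 0 1

noncomputable def logPreSch (h g ω : ℂ → ℂ) : ℂ → ℂ := fun z =>
  deriv (deriv h) z / deriv h z + deriv g z / g z -
    (starRingEnd ℂ) (ω z) * deriv ω z / ((1 - ‖ω z‖ ^ 2 : ℝ) : ℂ)

def normSet (P : ℂ → ℂ) : Set ℝ :=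
  {r | ∃ z ∈ unitDisk, r = (1 - ‖z‖ ^ 2) * ‖P z‖}

section Aux

open Function Filter Topology



noncomputable def mob (a : ℂ) : ℂ → ℂ := fun z => (z + a) / (1 + (starRingEnd ℂ) a * z)

lemma mob_denom_ne {a z : ℂ} (ha : ‖a‖ < 1) (hz : ‖z‖ < 1) :
    1 + (starRingEnd ℂ) a * z ≠ 0 := by
  intro h
  have h1 : ‖(starRingEnd ℂ) a * z‖ < 1 := by
    have he : ‖(starRingEnd ℂ) a * z‖ = ‖a‖ * ‖z‖ := by
      rw [norm_mul, RCLike.norm_conj]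
    rw [he]
    nlinarith [norm_nonneg a, norm_nonneg z]
  have : (starRingEnd ℂ) a * z = -1 := by linear_combination h
  rw [this, norm_neg, norm_one] at h1
  exact lt_irrefl _ h1

lemma mob_normSq_key (a z : ℂ) :
    Complex.normSq (1 + (starRingEnd ℂ) a * z) - Complex.normSq (z + a)
      = (1 - Complex.normSq a) * (1 - Complex.normSq z) := by
  simp only [Complex.normSq_apply, Complex.add_re, Complex.add_im, Complex.mul_re,
    Complex.mul_im, Complex.one_re, Complex.one_im, Complex.conj_re, Complex.conj_im]
  ring

lemma mob_mem {a z : ℂ} (ha : ‖a‖ < 1) (hz : ‖z‖ < 1) : ‖mob a z‖ < 1 := by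
  have hd := mob_denom_ne ha hz
  have hlt : Complex.normSq (z + a) < Complex.normSq (1 + (starRingEnd ℂ) a * z) := by
    have h1 : 0 < (1 - Complex.normSq a) * (1 - Complex.normSq z) := by
      apply mul_pos <;>
      · rw [sub_pos, ← Complex.sq_norm]
        nlinarith [norm_nonneg a, norm_nonneg z]
    nlinarith [mob_normSq_key a z]
  have hnorm : ‖z + a‖ < ‖1 + (starRingEnd ℂ) a * z‖ := by
    have := hlt
    rw [← Complex.sq_norm, ← Complex.sq_norm] at this
    exact lt_of_pow_lt_pow_left₀ 2 (norm_nonneg _) this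
  rw [mob, norm_div, div_lt_one (lt_of_le_of_lt (norm_nonneg _) hnorm)]
  exact hnorm

lemma mob_zero (a : ℂ) : mob a 0 = a := by simp [mob]

lemma mob_inv {a z : ℂ} (ha : ‖a‖ < 1) (hz : ‖z‖ < 1) : mob (-a) (mob a z) = z := by
  have d1 := mob_denom_ne ha hz
  have hm := mob_mem ha hz
  have d2 : 1 + (starRingEnd ℂ) (-a) * mob a z ≠ 0 :=
    mob_denom_ne (by simpa using ha) hm
  have hA : 1 - (starRingEnd ℂ) a * a ≠ 0 := by
    intro h
    have : (starRingEnd ℂ) a * a = 1 := by linear_combination -h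
    have h1 : ‖(starRingEnd ℂ) a * a‖ < 1 := by
      rw [norm_mul, RCLike.norm_conj]; nlinarith [norm_nonneg a]
    rw [this, norm_one] at h1; exact lt_irrefl _ h1
  unfold mob at d2 ⊢
  rw [map_neg] at d2 ⊢
  have hA' : (1 : ℂ) - a * (starRingEnd ℂ) a ≠ 0 := by
    intro h; apply hA; linear_combination h
  rw [div_eq_iff d2]
  have hq := div_mul_cancel₀ (z + a) d1
  linear_combination hq

lemma mob_hasDerivAt {a z : ℂ} (ha : ‖a‖ < 1) (hz : ‖z‖ < 1) :
    HasDerivAt (mob a) ((1 - (starRingEnd ℂ) a * a) / (1 + (starRingEnd ℂ) a * z) ^ 2) z := by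
  have d := mob_denom_ne ha hz
  have h1 : HasDerivAt (fun w : ℂ => w + a) 1 z := (hasDerivAt_id z).add_const a
  have h2 : HasDerivAt (fun w : ℂ => 1 + (starRingEnd ℂ) a * w) ((starRingEnd ℂ) a) z := by
    simpa using ((hasDerivAt_id z).const_mul ((starRingEnd ℂ) a)).const_add 1
  have := h1.fun_div h2 d
  rw [show (1 - (starRingEnd ℂ) a * a) / (1 + (starRingEnd ℂ) a * z) ^ 2 =
    (1 * (1 + (starRingEnd ℂ) a * z) - (z + a) * (starRingEnd ℂ) a) / (1 + (starRingEnd ℂ) a * z) ^ 2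
    by ring]
  exact this

lemma one_sub_conj_mul (z : ℂ) :
    (1 : ℂ) - (starRingEnd ℂ) z * z = ((1 - ‖z‖ ^ 2 : ℝ) : ℂ) := by
  rw [mul_comm, Complex.mul_conj]
  rw [Complex.normSq_eq_norm_sq]
  push_cast
  ring

lemma one_sub_sq_pos {z : ℂ} (hz : ‖z‖ < 1) : 0 < 1 - ‖z‖ ^ 2 := by
  nlinarith [norm_nonneg z]

lemma norm_one_sub_conj_mul {z : ℂ} (hz : ‖z‖ < 1) :
    ‖(1 : ℂ) - (starRingEnd ℂ) z * z‖ = 1 - ‖z‖ ^ 2 := by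
  rw [one_sub_conj_mul, Complex.norm_real, Real.norm_eq_abs, abs_of_pos (one_sub_sq_pos hz)]

lemma schwarz_pick {ω : ℂ → ℂ} (hd : DifferentiableOn ℂ ω (ball 0 1))
    (hmaps : MapsTo ω (ball 0 1) (ball (0 : ℂ) 1)) {a : ℂ} (ha : a ∈ ball (0 : ℂ) 1) :
    (1 - ‖a‖ ^ 2) * ‖deriv ω a‖ ≤ 1 - ‖ω a‖ ^ 2 := by
  have ha' : ‖a‖ < 1 := mem_ball_zero_iff.1 ha
  set b := ω a with hb_def
  have hb : ‖b‖ < 1 := mem_ball_zero_iff.1 (hmaps ha)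
  have hbneg : ‖-b‖ < 1 := by simpa using hb
  set W : ℂ → ℂ := fun z => mob (-b) (ω (mob a z)) with hW_def
  have hWmaps : MapsTo W (ball 0 1) (ball (0 : ℂ) 1) := by
    intro z hz
    have hz' : ‖z‖ < 1 := mem_ball_zero_iff.1 hz
    have h1 : ‖mob a z‖ < 1 := mob_mem ha' hz'
    have h2 : ‖ω (mob a z)‖ < 1 := mem_ball_zero_iff.1 (hmaps (mem_ball_zero_iff.2 h1))
    exact mem_ball_zero_iff.2 (mob_mem hbneg h2)
  have hW0 : W 0 = 0 := by
    have : ω (mob a 0) = b := by rw [mob_zero]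
    simp only [hW_def, this, mob]
    simp
    exact Or.inl (by rw [hb_def]; ring)
  have hWd : DifferentiableOn ℂ W (ball 0 1) := by
    intro z hz
    have hz' : ‖z‖ < 1 := mem_ball_zero_iff.1 hz
    have h1 : ‖mob a z‖ < 1 := mob_mem ha' hz'
    have h2 : ‖ω (mob a z)‖ < 1 := mem_ball_zero_iff.1 (hmaps (mem_ball_zero_iff.2 h1))
    have d1 : DifferentiableAt ℂ (mob a) z := (mob_hasDerivAt ha' hz').differentiableAt
    have d2 : DifferentiableAt ℂ ω (mob a z) :=
      hd.differentiableAt (isOpen_ball.mem_nhds (mem_ball_zero_iff.2 h1))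
    have d3 : DifferentiableAt ℂ (mob (-b)) (ω (mob a z)) :=
      (mob_hasDerivAt hbneg h2).differentiableAt
    exact (d3.comp z (d2.comp z d1)).differentiableWithinAt
  have hSch : ‖deriv W 0‖ ≤ 1 := by
    have h := Complex.norm_deriv_le_div_of_mapsTo_ball hWd (by rw [hW0]; exact hWmaps.mono_right ball_subset_closedBall) one_pos
    simpa using h
  -- compute deriv W 0
  have hmob0 : HasDerivAt (mob a) (1 - (starRingEnd ℂ) a * a) 0 := by
    have := mob_hasDerivAt ha' (by simp : ‖(0:ℂ)‖ < 1)
    simpa using this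
  have hωa : HasDerivAt ω (deriv ω a) a :=
    (hd.differentiableAt (isOpen_ball.mem_nhds ha)).hasDerivAt
  have hmb : HasDerivAt (mob (-b))
      ((1 - (starRingEnd ℂ) b * b) / (1 - (starRingEnd ℂ) b * b) ^ 2) b := by
    have := mob_hasDerivAt hbneg hb
    simpa [map_neg, sub_eq_add_neg, neg_mul] using this
  have hωa0 : HasDerivAt ω (deriv ω a) (mob a 0) := by rwa [mob_zero]
  have hmb0 : HasDerivAt (mob (-b))
      ((1 - (starRingEnd ℂ) b * b) / (1 - (starRingEnd ℂ) b * b) ^ 2) (ω (mob a 0)) := by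
    rwa [mob_zero]
  have hWder : HasDerivAt W
      (((1 - (starRingEnd ℂ) b * b) / (1 - (starRingEnd ℂ) b * b) ^ 2) *
        (deriv ω a * (1 - (starRingEnd ℂ) a * a))) 0 := by
    have := (hmb0.comp 0 (hωa0.comp 0 hmob0 : HasDerivAt (fun z => ω (mob a z)) _ 0))
    exact this
  have hderW : deriv W 0 = ((1 - (starRingEnd ℂ) b * b) / (1 - (starRingEnd ℂ) b * b) ^ 2) *
      (deriv ω a * (1 - (starRingEnd ℂ) a * a)) := hWder.deriv
  have hbn : ‖(1 : ℂ) - (starRingEnd ℂ) b * b‖ = 1 - ‖b‖ ^ 2 := norm_one_sub_conj_mul hb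
  have han : ‖(1 : ℂ) - (starRingEnd ℂ) a * a‖ = 1 - ‖a‖ ^ 2 := norm_one_sub_conj_mul ha'
  have hbpos : 0 < 1 - ‖b‖ ^ 2 := one_sub_sq_pos hb
  have hnormW : ‖deriv W 0‖ =
      (1 - ‖a‖ ^ 2) * ‖deriv ω a‖ / (1 - ‖b‖ ^ 2) := by
    have hXne : (1 : ℂ) - (starRingEnd ℂ) b * b ≠ 0 := by
      intro contra
      rw [contra, norm_zero] at hbn
      linarith
    have hsimp : deriv W 0 =
        ((1 : ℂ) - (starRingEnd ℂ) b * b)⁻¹ * (deriv ω a * (1 - (starRingEnd ℂ) a * a)) := by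
      rw [hderW, sq, div_mul_cancel_left₀ hXne]
    rw [hsimp, norm_mul, norm_inv, hbn, norm_mul, han]
    field_simp
  rw [hnormW, div_le_one hbpos] at hSch
  exact hSch

-- ‖F''(0)‖ ≤ 2‖F'(0)‖ for injective holomorphic F on 𝔻 with convex image and F' ≠ 0.
lemma convex_coeff_bound (F : ℂ → ℂ) (hF : DifferentiableOn ℂ F (ball 0 1))
    (hinj : InjOn F (ball 0 1)) (hconv : Convex ℝ (F '' (ball 0 1)))
    (hF' : ∀ z ∈ ball (0 : ℂ) 1, deriv F z ≠ 0) :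
    ‖deriv (deriv F) 0‖ ≤ 2 * ‖deriv F 0‖ := by
  have h0 : (0 : ℂ) ∈ ball (0 : ℂ) 1 := mem_ball_self one_pos
  have hFa : AnalyticOnNhd ℂ F (ball 0 1) := hF.analyticOnNhd isOpen_ball
  have hF'a : AnalyticOnNhd ℂ (deriv F) (ball 0 1) := hFa.deriv
  set m : ℂ → ℂ := fun z => (F z + F (-z)) / 2 with hm_def
  have hneg : ∀ z : ℂ, z ∈ ball (0 : ℂ) 1 → -z ∈ ball (0 : ℂ) 1 := by
    intro z hz; rw [mem_ball_zero_iff] at hz ⊢; simpa using hz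
  have hm_diff : ∀ z ∈ ball (0 : ℂ) 1, DifferentiableAt ℂ m z := by
    intro z hz
    have d1 : DifferentiableAt ℂ F z := hF.differentiableAt (isOpen_ball.mem_nhds hz)
    have d2 : DifferentiableAt ℂ (fun t : ℂ => F (-t)) z := by
      have := (hF.differentiableAt (isOpen_ball.mem_nhds (hneg z hz))).comp z
        (differentiable_neg.differentiableAt (𝕜 := ℂ))
      exact this
    exact (d1.add d2).div_const 2
  -- choose the function w
  have exis : ∀ z : ℂ, ∃ u : ℂ, z ∈ ball (0 : ℂ) 1 → (u ∈ ball (0 : ℂ) 1 ∧ F u = m z) := by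
    intro z
    by_cases hz : z ∈ ball (0 : ℂ) 1
    · have h1 : F z ∈ F '' ball 0 1 := mem_image_of_mem F hz
      have h2 : F (-z) ∈ F '' ball 0 1 := mem_image_of_mem F (hneg z hz)
      have hmid : m z ∈ F '' ball 0 1 := by
        have := hconv h1 h2 (by norm_num : (0:ℝ) ≤ 1/2) (by norm_num : (0:ℝ) ≤ 1/2)
          (by norm_num)
        have heq : m z = (1/2 : ℝ) • F z + (1/2 : ℝ) • F (-z) := by
          rw [Complex.real_smul, Complex.real_smul]
          push_cast
          ring
        rwa [heq]
      obtain ⟨u, hu, hFu⟩ := hmid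
      exact ⟨u, fun _ => ⟨hu, hFu⟩⟩
    · exact ⟨0, fun hz' => absurd hz' hz⟩
  choose w hw using exis
  have uniq : ∀ z ∈ ball (0 : ℂ) 1, ∀ t ∈ ball (0 : ℂ) 1, F t = m z → t = w z := by
    intro z hz t ht hFt
    exact hinj ht (hw z hz).1 (by rw [hFt, (hw z hz).2])
  have hw0 : w 0 = 0 := by
    have hm0 : F 0 = m 0 := by simp [hm_def]
    exact (uniq 0 h0 0 h0 hm0).symm
  have heven : ∀ z ∈ ball (0 : ℂ) 1, w (-z) = w z := by
    intro z hz
    apply uniq z hz (w (-z)) (hw (-z) (hneg z hz)).1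
    rw [(hw (-z) (hneg z hz)).2]
    simp only [hm_def, neg_neg]
    ring
  -- differentiability of w
  have hwd : ∀ z ∈ ball (0 : ℂ) 1, DifferentiableAt ℂ w z := by
    intro z hz
    set u := w z with hu_def
    have hu : u ∈ ball (0 : ℂ) 1 := (hw z hz).1
    have hFu : F u = m z := (hw z hz).2
    have hAn : AnalyticAt ℂ F u := hFa u hu
    have hstrict : HasStrictDerivAt F (deriv F u) u := by
      have h1 := hAn.hasStrictFDerivAt
      have h2 := h1.hasStrictDerivAt
      rwa [show (fderiv ℂ F u) 1 = deriv F u from rfl] at h2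
    have hneq := hF' u hu
    have hEq := hstrict.hasStrictFDerivAt_equiv hneq
    set G := hEq.localInverse F _ u with hG_def
    have hGFu : G (F u) = u := hEq.localInverse_apply_image
    have hGc : ContinuousAt G (F u) := hEq.localInverse_continuousAt
    have hGd : DifferentiableAt ℂ G (F u) :=
      hEq.to_localInverse.differentiableAt
    have hm_cont : ContinuousAt m z := (hm_diff z hz).continuousAt
    have hm_tendsto : Tendsto m (𝓝 z) (𝓝 (F u)) := by
      rw [hFu]; exact hm_cont
    have ev1 : ∀ᶠ z' in 𝓝 z, F (G (m z')) = m z' :=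
      hm_tendsto.eventually hEq.eventually_right_inverse
    have ev2 : ∀ᶠ z' in 𝓝 z, G (m z') ∈ ball (0 : ℂ) 1 := by
      have hGm : Tendsto (fun z' => G (m z')) (𝓝 z) (𝓝 u) := by
        rw [← hGFu]
        exact hGc.tendsto.comp hm_tendsto
      exact hGm.eventually (isOpen_ball.eventually_mem hu)
    have ev3 : ∀ᶠ z' in 𝓝 z, z' ∈ ball (0 : ℂ) 1 := isOpen_ball.eventually_mem hz
    have hwG : w =ᶠ[𝓝 z] fun z' => G (m z') := by
      filter_upwards [ev1, ev2, ev3] with z' h1 h2 h3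
      exact (uniq z' h3 (G (m z')) h2 h1).symm
    have hGmd : DifferentiableAt ℂ (fun z' => G (m z')) z := by
      have : DifferentiableAt ℂ G (m z) := by rwa [← hFu]
      exact this.comp z (hm_diff z hz)
    exact hGmd.congr_of_eventuallyEq hwG
  have hwd_on : DifferentiableOn ℂ w (ball 0 1) :=
    fun z hz => (hwd z hz).differentiableWithinAt
  have hwAn : AnalyticOnNhd ℂ w (ball 0 1) := hwd_on.analyticOnNhd isOpen_ball
  have hw_maps : MapsTo w (ball 0 1) (ball (0 : ℂ) 1) := fun z hz => (hw z hz).1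
  -- deriv w 0 = 0
  have hdw0 : deriv w 0 = 0 := by
    have hev : w =ᶠ[𝓝 (0:ℂ)] fun z => w (-z) := by
      filter_upwards [isOpen_ball.eventually_mem h0] with z hz
      exact (heven z hz).symm
    have h1 : deriv w 0 = deriv (fun z => w (-z)) 0 := hev.deriv_eq
    rw [deriv_comp_neg, neg_zero] at h1
    linear_combination h1 / 2
  set w₁ : ℂ → ℂ := dslope w 0 with hw₁_def
  have hw₁0 : w₁ 0 = 0 := by rw [hw₁_def, dslope_same]; exact hdw0
  have hw₁d : DifferentiableOn ℂ w₁ (ball 0 1) :=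
    (differentiableOn_dslope (isOpen_ball.mem_nhds h0)).mpr hwd_on
  have hw₁_le : ∀ z ∈ ball (0 : ℂ) 1, ‖w₁ z‖ ≤ 1 := by
    intro z hz
    have := Complex.norm_dslope_le_div_of_mapsTo_ball hwd_on
      ((by rwa [hw0] : MapsTo w (ball 0 1) (ball (w 0) 1)).mono_right ball_subset_closedBall) hz
    simpa using this
  -- ‖deriv w₁ 0‖ ≤ 1
  have hc_le : ‖deriv w₁ 0‖ ≤ 1 := by
    have claim : ∀ r : ℝ, 0 < r → r < 1 → ‖deriv w₁ 0‖ ≤ 1 / r / r := by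
      intro r hr0 hr1
      have hsub : ball (0 : ℂ) r ⊆ ball 0 1 := ball_subset_ball hr1.le
      have hd : DifferentiableOn ℂ w₁ (ball 0 r) := hw₁d.mono hsub
      have hmaps : MapsTo w₁ (ball 0 r) (ball (w₁ 0) (1 / r)) := by
        intro z hz
        rw [hw₁0, mem_ball_zero_iff]
        exact lt_of_le_of_lt (hw₁_le z (hsub hz)) (one_lt_one_div hr0 hr1)
      exact Complex.norm_deriv_le_div_of_mapsTo_ball hd (hmaps.mono_right ball_subset_closedBall) hr0
    have ht : Tendsto (fun r : ℝ => 1 / r / r) (𝓝[<] (1:ℝ)) (𝓝 (1 / 1 / 1)) := by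
      apply Tendsto.mono_left _ nhdsWithin_le_nhds
      exact ((continuousAt_const.div continuousAt_id one_ne_zero).div continuousAt_id
        one_ne_zero)
    have hev : ∀ᶠ r in 𝓝[<] (1:ℝ), ‖deriv w₁ 0‖ ≤ 1 / r / r := by
      filter_upwards [Ioo_mem_nhdsLT_of_mem (⟨by norm_num, le_rfl⟩ : (1:ℝ) ∈ Ioc (1/2) 1)]
        with r hr
      exact claim r (by linarith [hr.1]) hr.2
    have := ge_of_tendsto ht hev
    simpa using this
  -- w z = z * w₁ z
  have hww₁ : ∀ z : ℂ, w z = z * w₁ z := by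
    intro z
    have := sub_smul_dslope w 0 z
    rw [hw0, sub_zero, sub_zero, smul_eq_mul] at this
    exact this.symm
  -- second derivative of w at 0
  have hw₁An : AnalyticAt ℂ w₁ 0 := hw₁d.analyticAt (isOpen_ball.mem_nhds h0)
  have hdw₁An : AnalyticAt ℂ (deriv w₁) 0 := (hw₁d.analyticOnNhd isOpen_ball).deriv 0 h0
  have hwfun : w = fun t => t * w₁ t := funext hww₁
  have hderiv_w : ∀ z ∈ ball (0:ℂ) 1, deriv w z = w₁ z + z * deriv w₁ z := by
    intro z hz
    have hdz : HasDerivAt w₁ (deriv w₁ z) z :=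
      (hw₁d.differentiableAt (isOpen_ball.mem_nhds hz)).hasDerivAt
    have hprod : HasDerivAt (fun t => t * w₁ t) (1 * w₁ z + z * deriv w₁ z) z :=
      (hasDerivAt_id z).mul hdz
    rw [hwfun, hprod.deriv]
    ring
  have hsecond_w : deriv (deriv w) 0 = 2 * deriv w₁ 0 := by
    have hev : deriv w =ᶠ[𝓝 (0:ℂ)] fun z => w₁ z + z * deriv w₁ z := by
      filter_upwards [isOpen_ball.eventually_mem h0] with z hz
      exact hderiv_w z hz
    rw [hev.deriv_eq]
    have h1 : HasDerivAt (fun z : ℂ => w₁ z + z * deriv w₁ z)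
        (deriv w₁ 0 + (1 * deriv w₁ 0 + 0 * deriv (deriv w₁) 0)) 0 :=
      (hw₁An.differentiableAt.hasDerivAt).add
        ((hasDerivAt_id 0).mul hdw₁An.differentiableAt.hasDerivAt)
    rw [h1.deriv]
    ring
  -- F ∘ w = m near 0
  have hKm : (fun z => F (w z)) =ᶠ[𝓝 (0:ℂ)] m := by
    filter_upwards [isOpen_ball.eventually_mem h0] with z hz
    exact (hw z hz).2
  have hderivK : ∀ z ∈ ball (0:ℂ) 1,
      deriv (fun t => F (w t)) z = deriv F (w z) * deriv w z := by
    intro z hz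
    have hF1 : HasDerivAt F (deriv F (w z)) (w z) :=
      (hFa (w z) (hw_maps hz)).differentiableAt.hasDerivAt
    have hw1 : HasDerivAt w (deriv w z) z := (hwd z hz).hasDerivAt
    have := hF1.comp z hw1
    exact this.deriv
  have hKev : deriv (fun t => F (w t)) =ᶠ[𝓝 (0:ℂ)]
      fun z => deriv F (w z) * deriv w z := by
    filter_upwards [isOpen_ball.eventually_mem h0] with z hz
    exact hderivK z hz
  have hmev : deriv m =ᶠ[𝓝 (0:ℂ)] fun z => (deriv F z - deriv F (-z)) / 2 := by
    filter_upwards [isOpen_ball.eventually_mem h0] with z hz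
    have hF1 : HasDerivAt F (deriv F z) z := (hFa z hz).differentiableAt.hasDerivAt
    have hF2 : HasDerivAt (fun t : ℂ => F (-t)) (deriv F (-z) * (-1)) z := by
      have houter : HasDerivAt F (deriv F (-z)) (-z) :=
        (hFa (-z) (hneg z hz)).differentiableAt.hasDerivAt
      exact houter.comp z (hasDerivAt_neg z)
    have hm1 : HasDerivAt m ((deriv F z + deriv F (-z) * (-1)) / 2) z :=
      (hF1.add hF2).div_const 2
    rw [hm1.deriv]
    ring
  have hd2m : deriv (deriv m) 0 = deriv (deriv F) 0 := by
    rw [hmev.deriv_eq]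
    have hdF0 : HasDerivAt (deriv F) (deriv (deriv F) 0) 0 :=
      (hF'a 0 h0).differentiableAt.hasDerivAt
    have hdF0n : HasDerivAt (fun z : ℂ => deriv F (-z)) (deriv (deriv F) 0 * (-1)) 0 := by
      have h1 : HasDerivAt (deriv F) (deriv (deriv F) (-0)) (-0) := by rw [neg_zero]; exact hdF0
      have h2 := h1.comp 0 (hasDerivAt_neg 0)
      rwa [neg_zero] at h2
    have hs : HasDerivAt (fun z : ℂ => (deriv F z - deriv F (-z)) / 2)
        ((deriv (deriv F) 0 - deriv (deriv F) 0 * (-1)) / 2) 0 := (hdF0.sub hdF0n).div_const 2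
    rw [hs.deriv]
    ring
  have hd2K : deriv (deriv (fun t => F (w t))) 0 = deriv F 0 * deriv (deriv w) 0 := by
    rw [hKev.deriv_eq]
    have hu : HasDerivAt (fun z => deriv F (w z)) (deriv (deriv F) 0 * deriv w 0) 0 := by
      have h1 : HasDerivAt (deriv F) (deriv (deriv F) (w 0)) (w 0) :=
        (hF'a (w 0) (hw_maps h0)).differentiableAt.hasDerivAt
      have h2 := h1.comp 0 (hwd 0 h0).hasDerivAt
      rw [hw0] at h2
      exact h2
    have hv : HasDerivAt (deriv w) (deriv (deriv w) 0) 0 :=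
      ((hwAn.deriv) 0 h0).differentiableAt.hasDerivAt
    have hp : HasDerivAt (fun z => deriv F (w z) * deriv w z) _ 0 := hu.mul hv
    rw [hp.deriv, hdw0, hw0]
    ring
  have h1K : deriv (deriv (fun t => F (w t))) 0 = deriv (deriv m) 0 := (hKm.deriv).deriv_eq
  have hfinal : deriv (deriv F) 0 = deriv F 0 * (2 * deriv w₁ 0) := by
    rw [← hd2m, ← h1K, hd2K, hsecond_w]
  rw [hfinal, norm_mul]
  have h2 : ‖(2:ℂ) * deriv w₁ 0‖ ≤ 2 := by
    rw [norm_mul]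
    have h3 : ‖(2:ℂ)‖ = 2 := by norm_num
    rw [h3]
    nlinarith [hc_le, norm_nonneg (deriv w₁ 0)]
  calc ‖deriv F 0‖ * ‖2 * deriv w₁ 0‖ ≤ ‖deriv F 0‖ * 2 :=
        mul_le_mul_of_nonneg_left h2 (norm_nonneg _)
    _ = 2 * ‖deriv F 0‖ := mul_comm _ _

lemma convex_second_deriv_bound {ψ : ℂ → ℂ} (hψ : DifferentiableOn ℂ ψ (ball 0 1))
    (hψuniv : InjOn ψ (ball 0 1)) (hψconv : Convex ℝ (ψ '' ball 0 1))
    (hψ' : ∀ z ∈ ball (0 : ℂ) 1, deriv ψ z ≠ 0) {a : ℂ} (ha : a ∈ ball (0 : ℂ) 1) :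
    (1 - ‖a‖ ^ 2) * ‖deriv (deriv ψ) a‖ ≤ 4 * ‖deriv ψ a‖ := by
  have ha' : ‖a‖ < 1 := mem_ball_zero_iff.1 ha
  set X : ℂ := 1 - (starRingEnd ℂ) a * a with hX_def
  have hXnorm : ‖X‖ = 1 - ‖a‖ ^ 2 := norm_one_sub_conj_mul ha'
  have hXpos : 0 < ‖X‖ := by rw [hXnorm]; exact one_sub_sq_pos ha'
  have hXne : X ≠ 0 := norm_pos_iff.1 hXpos
  set F : ℂ → ℂ := fun z => ψ (mob a z) with hF_def
  have hmaps : ∀ z : ℂ, z ∈ ball (0 : ℂ) 1 → mob a z ∈ ball (0 : ℂ) 1 := by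
    intro z hz
    exact mem_ball_zero_iff.2 (mob_mem ha' (mem_ball_zero_iff.1 hz))
  have hFd : DifferentiableOn ℂ F (ball 0 1) := by
    intro z hz
    have d1 : DifferentiableAt ℂ (mob a) z :=
      (mob_hasDerivAt ha' (mem_ball_zero_iff.1 hz)).differentiableAt
    have d2 : DifferentiableAt ℂ ψ (mob a z) :=
      hψ.differentiableAt (isOpen_ball.mem_nhds (hmaps z hz))
    exact (d2.comp z d1).differentiableWithinAt
  have hFinj : InjOn F (ball 0 1) := by
    intro x hx y hy hxy
    have h1 : mob a x = mob a y :=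
      hψuniv (hmaps x hx) (hmaps y hy) hxy
    have h2 := mob_inv ha' (mem_ball_zero_iff.1 hx)
    have h3 := mob_inv ha' (mem_ball_zero_iff.1 hy)
    rw [← h2, ← h3, h1]
  have himg : F '' ball 0 1 = ψ '' ball 0 1 := by
    apply Subset.antisymm
    · rintro _ ⟨z, hz, rfl⟩
      exact mem_image_of_mem ψ (hmaps z hz)
    · rintro _ ⟨u, hu, rfl⟩
      have hu' : ‖u‖ < 1 := mem_ball_zero_iff.1 hu
      have hna : ‖-a‖ < 1 := by simpa using ha'
      have h1 : mob (-a) u ∈ ball (0 : ℂ) 1 := mem_ball_zero_iff.2 (mob_mem hna hu')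
      have h2 : mob a (mob (-a) u) = u := by
        have := mob_inv hna hu'
        rwa [neg_neg] at this
      exact ⟨mob (-a) u, h1, by rw [hF_def]; simp only [h2]⟩
  have hderivF : ∀ z ∈ ball (0 : ℂ) 1, deriv F z =
      deriv ψ (mob a z) * (X / (1 + (starRingEnd ℂ) a * z) ^ 2) := by
    intro z hz
    have d1 := mob_hasDerivAt ha' (mem_ball_zero_iff.1 hz)
    have d2 : HasDerivAt ψ (deriv ψ (mob a z)) (mob a z) :=
      (hψ.differentiableAt (isOpen_ball.mem_nhds (hmaps z hz))).hasDerivAt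
    have := d2.comp z d1
    exact this.deriv
  have hF' : ∀ z ∈ ball (0 : ℂ) 1, deriv F z ≠ 0 := by
    intro z hz
    rw [hderivF z hz]
    apply mul_ne_zero (hψ' _ (hmaps z hz))
    exact div_ne_zero hXne (pow_ne_zero 2 (mob_denom_ne ha' (mem_ball_zero_iff.1 hz)))
  have h0 : (0 : ℂ) ∈ ball (0 : ℂ) 1 := mem_ball_self one_pos
  -- first derivative at 0
  have hF0 : deriv F 0 = deriv ψ a * X := by
    rw [hderivF 0 h0]
    simp [mob_zero]
  -- second derivative at 0
  have hψ'An : AnalyticOnNhd ℂ (deriv ψ) (ball 0 1) :=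
    (hψ.analyticOnNhd isOpen_ball).deriv
  have hF2 : deriv (deriv F) 0 =
      deriv (deriv ψ) a * X ^ 2 - 2 * (starRingEnd ℂ) a * deriv ψ a * X := by
    have hev : deriv F =ᶠ[𝓝 (0 : ℂ)]
        fun z => deriv ψ (mob a z) * (X / (1 + (starRingEnd ℂ) a * z) ^ 2) := by
      filter_upwards [isOpen_ball.eventually_mem h0] with z hz
      exact hderivF z hz
    rw [hev.deriv_eq]
    have hu : HasDerivAt (fun z => deriv ψ (mob a z)) (deriv (deriv ψ) a * X) 0 := by
      have h1 : HasDerivAt (deriv ψ) (deriv (deriv ψ) a) a :=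
        (hψ'An a ha).differentiableAt.hasDerivAt
      have h1' : HasDerivAt (deriv ψ) (deriv (deriv ψ) a) (mob a 0) := by rwa [mob_zero]
      have hm0 : HasDerivAt (mob a) X 0 := by
        have := mob_hasDerivAt ha' (by simp : ‖(0 : ℂ)‖ < 1)
        simpa using this
      exact h1'.comp 0 hm0
    have hq : HasDerivAt (fun z : ℂ => X / (1 + (starRingEnd ℂ) a * z) ^ 2)
        (-(2 * (starRingEnd ℂ) a) * X) 0 := by
      have hin : HasDerivAt (fun z : ℂ => 1 + (starRingEnd ℂ) a * z) ((starRingEnd ℂ) a) 0 := by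
        simpa using ((hasDerivAt_id (0:ℂ)).const_mul ((starRingEnd ℂ) a)).const_add 1
      have hD : HasDerivAt (fun z : ℂ => (1 + (starRingEnd ℂ) a * z) ^ 2)
          (2 * (1 + (starRingEnd ℂ) a * 0) ^ 1 * (starRingEnd ℂ) a) 0 := by
        simpa using hin.fun_pow 2
      have hDne : (1 + (starRingEnd ℂ) a * (0:ℂ)) ^ 2 ≠ 0 := by simp
      have := (hasDerivAt_const (0:ℂ) X).fun_div hD hDne
      rw [show -(2 * (starRingEnd ℂ) a) * X = (0 * (1 + (starRingEnd ℂ) a * 0) ^ 2 -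
          X * (2 * (1 + (starRingEnd ℂ) a * 0) ^ 1 * (starRingEnd ℂ) a)) /
          ((1 + (starRingEnd ℂ) a * 0) ^ 2) ^ 2 by
        simp only [mul_zero, add_zero, one_pow, pow_one]; ring]
      exact this
    have hp : HasDerivAt (fun z => deriv ψ (mob a z) * (X / (1 + (starRingEnd ℂ) a * z) ^ 2)) _ 0 :=
      hu.mul hq
    rw [hp.deriv]
    simp [mob_zero]
    ring
  have hbound := convex_coeff_bound F hFd hFinj (by rwa [himg]) hF'
  rw [hF2, hF0] at hbound
  -- factor out X
  have hfac : deriv (deriv ψ) a * X ^ 2 - 2 * (starRingEnd ℂ) a * deriv ψ a * X =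
      X * (deriv (deriv ψ) a * X - 2 * (starRingEnd ℂ) a * deriv ψ a) := by ring
  rw [hfac, norm_mul, norm_mul] at hbound
  have hkey : ‖deriv (deriv ψ) a * X - 2 * (starRingEnd ℂ) a * deriv ψ a‖ ≤
      2 * ‖deriv ψ a‖ := by
    have h1 : 2 * (‖deriv ψ a‖ * ‖X‖) = ‖X‖ * (2 * ‖deriv ψ a‖) := by ring
    rw [h1] at hbound
    exact le_of_mul_le_mul_left hbound hXpos
  have htri : ‖deriv (deriv ψ) a * X‖ ≤
      ‖deriv (deriv ψ) a * X - 2 * (starRingEnd ℂ) a * deriv ψ a‖ +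
        ‖2 * (starRingEnd ℂ) a * deriv ψ a‖ := by
    have h := norm_add_le (deriv (deriv ψ) a * X - 2 * (starRingEnd ℂ) a * deriv ψ a)
      (2 * (starRingEnd ℂ) a * deriv ψ a)
    simpa using h
  have hnorm2a : ‖2 * (starRingEnd ℂ) a * deriv ψ a‖ = 2 * ‖a‖ * ‖deriv ψ a‖ := by
    rw [norm_mul, norm_mul]
    have : ‖(2:ℂ)‖ = 2 := by norm_num
    rw [this, RCLike.norm_conj]
  have hfin : ‖deriv (deriv ψ) a * X‖ ≤ (2 + 2 * ‖a‖) * ‖deriv ψ a‖ := by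
    calc ‖deriv (deriv ψ) a * X‖ ≤ _ + _ := htri
      _ ≤ 2 * ‖deriv ψ a‖ + 2 * ‖a‖ * ‖deriv ψ a‖ := by
          rw [hnorm2a]; exact add_le_add hkey le_rfl
      _ = (2 + 2 * ‖a‖) * ‖deriv ψ a‖ := by ring
  rw [norm_mul, hXnorm] at hfin
  have haux : (2 + 2 * ‖a‖) * ‖deriv ψ a‖ ≤ 4 * ‖deriv ψ a‖ := by
    have := norm_nonneg (deriv ψ a)
    nlinarith [ha']
  calc (1 - ‖a‖ ^ 2) * ‖deriv (deriv ψ) a‖ = ‖deriv (deriv ψ) a‖ * (1 - ‖a‖ ^ 2) := mul_comm _ _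
    _ ≤ (2 + 2 * ‖a‖) * ‖deriv ψ a‖ := hfin
    _ ≤ 4 * ‖deriv ψ a‖ := haux

end Aux

open Function Filter Topology in
/-- If the analytic function `ψ` with `ψ' = h'g` is a convex univalent mapping of the disk, then the
pre-Schwarzian norm of the logharmonic mapping `f = h ⬝ conj g` satisfies `‖P_f‖ ≤ 5`. -/
theorem logharmonic_preSchwarzian_le_five (h g ψ ω : ℂ → ℂ)
    (hh : DifferentiableOn ℂ h unitDisk) (hh' : DifferentiableOn ℂ (deriv h) unitDisk)
    (hg : DifferentiableOn ℂ g unitDisk)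
    (hψ : DifferentiableOn ℂ ψ unitDisk)
    (hne : ∀ z ∈ unitDisk, deriv h z * g z ≠ 0)
    (hωdef : ∀ z ∈ unitDisk, ω z = deriv g z * h z / (g z * deriv h z))
    (hωmap : ∀ z ∈ unitDisk, ω z ∈ unitDisk)
    (hψeq : ∀ z ∈ unitDisk, deriv ψ z = deriv h z * g z)
    (hψuniv : Set.InjOn ψ unitDisk)
    (hψconv : Convex ℝ (ψ '' unitDisk)) :
    BddAbove (normSet (logPreSch h g ω)) ∧ sSup (normSet (logPreSch h g ω)) ≤ 5 := by
  have hud : unitDisk = ball (0 : ℂ) 1 := rfl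
  -- the pointwise bound
  have key : ∀ a ∈ unitDisk, (1 - ‖a‖ ^ 2) * ‖logPreSch h g ω a‖ ≤ 5 := by
    intro a ha
    have ha' : ‖a‖ < 1 := by rwa [hud, mem_ball_zero_iff] at ha
    have hA0 : (0 : ℝ) ≤ 1 - ‖a‖ ^ 2 := (one_sub_sq_pos ha').le
    have hψ'ne : ∀ z ∈ ball (0 : ℂ) 1, deriv ψ z ≠ 0 := by
      intro z hz
      rw [hψeq z (hud ▸ hz)]
      exact hne z (hud ▸ hz)
    -- bound on ψ''/ψ'
    have h2ψ : (1 - ‖a‖ ^ 2) * ‖deriv (deriv ψ) a‖ ≤ 4 * ‖deriv ψ a‖ :=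
      convex_second_deriv_bound (hud ▸ hψ) (hud ▸ hψuniv) (hud ▸ hψconv) hψ'ne (hud ▸ ha)
    -- ω is analytic on the disk
    have hωdiff : DifferentiableOn ℂ ω (ball 0 1) := by
      intro z hz
      have hz' : z ∈ unitDisk := hud ▸ hz
      have ev : ω =ᶠ[𝓝 z] fun t => deriv g t * h t / (g t * deriv h t) := by
        filter_upwards [isOpen_ball.eventually_mem hz] with t ht
        exact hωdef t (hud ▸ ht)
      have dg' : DifferentiableAt ℂ (deriv g) z :=
        (((hud ▸ hg : DifferentiableOn ℂ g (ball 0 1)).analyticOnNhd isOpen_ball).deriv z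
          hz).differentiableAt
      have dh : DifferentiableAt ℂ h z :=
        (hud ▸ hh : DifferentiableOn ℂ h (ball 0 1)).differentiableAt (isOpen_ball.mem_nhds hz)
      have dgz : DifferentiableAt ℂ g z :=
        (hud ▸ hg : DifferentiableOn ℂ g (ball 0 1)).differentiableAt (isOpen_ball.mem_nhds hz)
      have dh' : DifferentiableAt ℂ (deriv h) z :=
        (hud ▸ hh' : DifferentiableOn ℂ (deriv h) (ball 0 1)).differentiableAt
          (isOpen_ball.mem_nhds hz)
      have hden : g z * deriv h z ≠ 0 := by
        have := hne z hz'
        rw [mul_comm]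
        exact this
      have hdiff : DifferentiableAt ℂ (fun t => deriv g t * h t / (g t * deriv h t)) z :=
        (dg'.mul dh).div (dgz.mul dh') hden
      exact (hdiff.congr_of_eventuallyEq ev).differentiableWithinAt
    have hωm : MapsTo ω (ball 0 1) (ball (0 : ℂ) 1) := by
      intro z hz
      exact hud ▸ hωmap z (hud ▸ hz)
    have hSP : (1 - ‖a‖ ^ 2) * ‖deriv ω a‖ ≤ 1 - ‖ω a‖ ^ 2 :=
      schwarz_pick hωdiff hωm (hud ▸ ha)
    have hωa : ‖ω a‖ < 1 := by
      have := hωmap a ha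
      rwa [hud, mem_ball_zero_iff] at this
    have hB : 0 < 1 - ‖ω a‖ ^ 2 := one_sub_sq_pos hωa
    -- value of ψ' and ψ''
    have hψ'a : deriv ψ a = deriv h a * g a := hψeq a ha
    have hψ''a : deriv (deriv ψ) a = deriv (deriv h) a * g a + deriv h a * deriv g a := by
      have ev : deriv ψ =ᶠ[𝓝 a] fun z => deriv h z * g z := by
        filter_upwards [isOpen_ball.eventually_mem (hud ▸ ha)] with t ht
        exact hψeq t (hud ▸ ht)
      rw [ev.deriv_eq]
      have d1 : HasDerivAt (deriv h) (deriv (deriv h) a) a :=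
        ((hud ▸ hh' : DifferentiableOn ℂ (deriv h) (ball 0 1)).differentiableAt
          (isOpen_ball.mem_nhds (hud ▸ ha))).hasDerivAt
      have d2 : HasDerivAt g (deriv g a) a :=
        ((hud ▸ hg : DifferentiableOn ℂ g (ball 0 1)).differentiableAt
          (isOpen_ball.mem_nhds (hud ▸ ha))).hasDerivAt
      exact (d1.mul d2).deriv
    have hh'ne : deriv h a ≠ 0 := by
      have := hne a ha; exact fun hc => this (by rw [hc, zero_mul])
    have hgne : g a ≠ 0 := by
      have := hne a ha; exact fun hc => this (by rw [hc, mul_zero])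
    have hψ'nea : deriv ψ a ≠ 0 := by rw [hψ'a]; exact mul_ne_zero hh'ne hgne
    have hratio : deriv (deriv h) a / deriv h a + deriv g a / g a =
        deriv (deriv ψ) a / deriv ψ a := by
      rw [hψ''a, hψ'a]
      field_simp
    -- expression for the pre-Schwarzian
    have hP : logPreSch h g ω a = deriv (deriv ψ) a / deriv ψ a -
        (starRingEnd ℂ) (ω a) * deriv ω a / ((1 - ‖ω a‖ ^ 2 : ℝ) : ℂ) := by
      rw [logPreSch, hratio]
    -- bound on the first term
    have hψ'pos : 0 < ‖deriv ψ a‖ := norm_pos_iff.2 hψ'nea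
    have bound1 : (1 - ‖a‖ ^ 2) * ‖deriv (deriv ψ) a / deriv ψ a‖ ≤ 4 := by
      rw [norm_div, ← mul_div_assoc, div_le_iff₀ hψ'pos]
      exact h2ψ
    have hTnorm : ‖(starRingEnd ℂ) (ω a) * deriv ω a / ((1 - ‖ω a‖ ^ 2 : ℝ) : ℂ)‖
        = ‖ω a‖ * ‖deriv ω a‖ / (1 - ‖ω a‖ ^ 2) := by
      rw [norm_div, norm_mul, RCLike.norm_conj, Complex.norm_real, Real.norm_eq_abs,
        abs_of_pos hB]
    have bound2 : (1 - ‖a‖ ^ 2) *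
        ‖(starRingEnd ℂ) (ω a) * deriv ω a / ((1 - ‖ω a‖ ^ 2 : ℝ) : ℂ)‖ ≤ 1 := by
      rw [hTnorm]
      have h1 : (1 - ‖a‖ ^ 2) * (‖ω a‖ * ‖deriv ω a‖ / (1 - ‖ω a‖ ^ 2)) =
          ‖ω a‖ * (((1 - ‖a‖ ^ 2) * ‖deriv ω a‖) / (1 - ‖ω a‖ ^ 2)) := by ring
      rw [h1]
      have h2 : ((1 - ‖a‖ ^ 2) * ‖deriv ω a‖) / (1 - ‖ω a‖ ^ 2) ≤ 1 := by
        rw [div_le_one hB]; exact hSP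
      calc ‖ω a‖ * (((1 - ‖a‖ ^ 2) * ‖deriv ω a‖) / (1 - ‖ω a‖ ^ 2)) ≤ ‖ω a‖ * 1 :=
            mul_le_mul_of_nonneg_left h2 (norm_nonneg _)
        _ = ‖ω a‖ := mul_one _
        _ ≤ 1 := hωa.le
    rw [hP]
    calc (1 - ‖a‖ ^ 2) * ‖deriv (deriv ψ) a / deriv ψ a -
          (starRingEnd ℂ) (ω a) * deriv ω a / ((1 - ‖ω a‖ ^ 2 : ℝ) : ℂ)‖
        ≤ (1 - ‖a‖ ^ 2) * (‖deriv (deriv ψ) a / deriv ψ a‖ +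
            ‖(starRingEnd ℂ) (ω a) * deriv ω a / ((1 - ‖ω a‖ ^ 2 : ℝ) : ℂ)‖) :=
          mul_le_mul_of_nonneg_left (norm_sub_le _ _) hA0
      _ = (1 - ‖a‖ ^ 2) * ‖deriv (deriv ψ) a / deriv ψ a‖ +
          (1 - ‖a‖ ^ 2) * ‖(starRingEnd ℂ) (ω a) * deriv ω a /
            ((1 - ‖ω a‖ ^ 2 : ℝ) : ℂ)‖ := by ring
      _ ≤ 4 + 1 := add_le_add bound1 bound2
      _ = 5 := by norm_num
  constructor
  · refine ⟨5, fun r hr => ?_⟩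
    obtain ⟨z, hz, rfl⟩ := hr
    exact key z hz
  · apply Real.sSup_le
    · rintro r ⟨z, hz, rfl⟩
      exact key z hz
    · norm_num
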